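/- Let C1 and C2 be catenaries hanging from the same suspension points A = (xA, hA), B = (xB, hB), xA < xB, with arc lengths l1 and l2 over [xA, xB]. If l1 ≥ l2, then C2(x) ≥ C1(x) for all x ∈ [xA, xB]. -/

import Mathlib

open Real

lemma cat_hasDerivAt (a x0 y0 : ℝ) (ha : a ≠ 0) (x : ℝ) :
    HasDerivAt (fun x => a * Real.cosh ((x - x0) / a) + y0)
      (Real.sinh ((x - x0) / a)) x := by
  have hu : HasDerivAt (fun x : ℝ => (x - x0) / a) (1 / a) x := by
    simpa using ((hasDerivAt_id x).sub_const x0).div_const a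
  have := (hu.cosh.const_mul a).add_const y0
  refine this.congr_deriv ?_
  field_simp

lemma cat_deriv_hasDerivAt (a x0 : ℝ) (ha : a ≠ 0) (x : ℝ) :
    HasDerivAt (fun x => Real.sinh ((x - x0) / a))
      (Real.cosh ((x - x0) / a) / a) x := by
  have hu : HasDerivAt (fun x : ℝ => (x - x0) / a) (1 / a) x := by
    simpa using ((hasDerivAt_id x).sub_const x0).div_const a
  have := hu.sinh
  convert this using 1
  field_simp

lemma sinh_lt_mul_cosh {t : ℝ} (ht : 0 < t) : Real.sinh t < t * Real.cosh t := by
  have key : StrictMonoOn (fun y : ℝ => y * Real.cosh y - Real.sinh y) (Set.Ici 0) := by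
    apply strictMonoOn_of_deriv_pos (convex_Ici 0)
    · fun_prop
    · intro x hx
      rw [interior_Ici] at hx
      have hd : HasDerivAt (fun y : ℝ => y * Real.cosh y - Real.sinh y) (x * Real.sinh x) x := by
        have := ((hasDerivAt_id x).mul (Real.hasDerivAt_cosh x)).sub (Real.hasDerivAt_sinh x)
        simp only [id] at this
        exact this.congr_deriv (by ring)
      rw [hd.deriv]
      exact mul_pos hx (Real.sinh_pos_iff.2 hx)
  have := key (Set.self_mem_Ici) (le_of_lt ht : (0:ℝ) ≤ t) ht
  simpa using this

lemma sinh_div_strict {u v : ℝ} (hu : 0 < u) (huv : u < v) :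
    Real.sinh u / u < Real.sinh v / v := by
  have key : StrictMonoOn (fun t : ℝ => Real.sinh t / t) (Set.Ioi 0) := by
    apply strictMonoOn_of_deriv_pos (convex_Ioi 0)
    · intro x hx
      exact (Real.continuous_sinh.continuousOn.div continuousOn_id (fun y hy => ne_of_gt hy)) x hx
    · intro x hx
      rw [interior_Ioi] at hx
      have hd : HasDerivAt (fun t : ℝ => Real.sinh t / t)
          ((Real.cosh x * x - Real.sinh x * 1) / x ^ 2) x :=
        (Real.hasDerivAt_sinh x).div (hasDerivAt_id x) (ne_of_gt hx)
      rw [hd.deriv]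
      apply div_pos _ (pow_pos hx 2)
      have := sinh_lt_mul_cosh hx
      nlinarith
  exact key (Set.mem_Ioi.2 hu) (Set.mem_Ioi.2 (hu.trans huv)) huv

lemma cat_arclength (a x0 : ℝ) (ha : 0 < a) (p q : ℝ) :
    (∫ x in p..q, Real.sqrt (1 + Real.sinh ((x - x0) / a) ^ 2))
      = a * Real.sinh ((q - x0) / a) - a * Real.sinh ((p - x0) / a) := by
  have key : ∀ x : ℝ, Real.sqrt (1 + Real.sinh ((x - x0) / a) ^ 2)
      = Real.cosh ((x - x0) / a) := by
    intro x
    rw [show (1 : ℝ) + Real.sinh ((x - x0)/a) ^ 2 = Real.cosh ((x - x0)/a) ^ 2 by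
      rw [Real.cosh_sq]; ring]
    exact Real.sqrt_sq (Real.cosh_pos _).le
  simp only [key]
  have hF : ∀ x ∈ Set.uIcc p q, HasDerivAt (fun x => a * Real.sinh ((x - x0) / a))
      (Real.cosh ((x - x0) / a)) x := by
    intro x _
    have hu : HasDerivAt (fun x : ℝ => (x - x0) / a) (1 / a) x := by
      simpa using ((hasDerivAt_id x).sub_const x0).div_const a
    have := hu.sinh.const_mul a
    refine this.congr_deriv ?_
    field_simp
  rw [intervalIntegral.integral_eq_sub_of_hasDerivAt hF
    ((Real.continuous_cosh.comp (by continuity)).intervalIntegrable p q)]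

theorem longer_catenary_lies_lower
    (a1 x01 y01 a2 x02 y02 xA xB hA hB l1 l2 : ℝ)
    (ha1 : 0 < a1) (ha2 : 0 < a2) (hx : xA < xB)
    (C1 C2 : ℝ → ℝ)
    (hC1 : ∀ x, C1 x = a1 * Real.cosh ((x - x01) / a1) + y01)
    (hC2 : ∀ x, C2 x = a2 * Real.cosh ((x - x02) / a2) + y02)
    (hA1 : C1 xA = hA) (hA2 : C2 xA = hA)
    (hB1 : C1 xB = hB) (hB2 : C2 xB = hB)
    (hl1 : l1 = ∫ x in xA..xB, Real.sqrt (1 + deriv C1 x ^ 2))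
    (hl2 : l2 = ∫ x in xA..xB, Real.sqrt (1 + deriv C2 x ^ 2))
    (hl : l1 ≥ l2) :
    ∀ x ∈ Set.Icc xA xB, C1 x ≤ C2 x := by
  have hC1' : C1 = fun x => a1 * Real.cosh ((x - x01) / a1) + y01 := funext hC1
  have hC2' : C2 = fun x => a2 * Real.cosh ((x - x02) / a2) + y02 := funext hC2
  subst hC1' hC2'
  simp only at hA1 hA2 hB1 hB2
  have hd1 : ∀ x, deriv (fun x => a1 * Real.cosh ((x - x01) / a1) + y01) x
      = Real.sinh ((x - x01) / a1) := fun x => (cat_hasDerivAt a1 x01 y01 ha1.ne' x).deriv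
  have hd2 : ∀ x, deriv (fun x => a2 * Real.cosh ((x - x02) / a2) + y02) x
      = Real.sinh ((x - x02) / a2) := fun x => (cat_hasDerivAt a2 x02 y02 ha2.ne' x).deriv
  simp only [hd1] at hl1
  simp only [hd2] at hl2
  rw [cat_arclength a1 x01 ha1 xA xB] at hl1
  rw [cat_arclength a2 x02 ha2 xA xB] at hl2
  -- midpoint / half-width parametrization
  obtain ⟨m1, hm1⟩ : ∃ m, m = ((xA + xB) / 2 - x01) / a1 := ⟨_, rfl⟩
  obtain ⟨m2, hm2⟩ : ∃ m, m = ((xA + xB) / 2 - x02) / a2 := ⟨_, rfl⟩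
  obtain ⟨d1, hd1d⟩ : ∃ d, d = (xB - xA) / (2 * a1) := ⟨_, rfl⟩
  obtain ⟨d2, hd2d⟩ : ∃ d, d = (xB - xA) / (2 * a2) := ⟨_, rfl⟩
  have hd1pos : 0 < d1 := by rw [hd1d]; exact div_pos (by linarith) (by linarith)
  have hd2pos : 0 < d2 := by rw [hd2d]; exact div_pos (by linarith) (by linarith)
  have e1B : (xB - x01) / a1 = m1 + d1 := by rw [hm1, hd1d]; field_simp; ring
  have e1A : (xA - x01) / a1 = m1 - d1 := by rw [hm1, hd1d]; field_simp; ring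
  have e2B : (xB - x02) / a2 = m2 + d2 := by rw [hm2, hd2d]; field_simp; ring
  have e2A : (xA - x02) / a2 = m2 - d2 := by rw [hm2, hd2d]; field_simp; ring
  have hh1 : hB - hA = 2 * a1 * Real.sinh m1 * Real.sinh d1 := by
    rw [← hB1, ← hA1, e1B, e1A, Real.cosh_add, Real.cosh_sub]; ring
  have hh2 : hB - hA = 2 * a2 * Real.sinh m2 * Real.sinh d2 := by
    rw [← hB2, ← hA2, e2B, e2A, Real.cosh_add, Real.cosh_sub]; ring
  have hl1' : l1 = 2 * a1 * Real.cosh m1 * Real.sinh d1 := by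
    rw [hl1, e1B, e1A, Real.sinh_add, Real.sinh_sub]; ring
  have hl2' : l2 = 2 * a2 * Real.cosh m2 * Real.sinh d2 := by
    rw [hl2, e2B, e2A, Real.sinh_add, Real.sinh_sub]; ring
  have hl1pos : 0 < l1 := by
    rw [hl1']
    exact mul_pos (mul_pos (mul_pos two_pos ha1) (Real.cosh_pos m1)) (Real.sinh_pos_iff.2 hd1pos)
  have hl2pos : 0 < l2 := by
    rw [hl2']
    exact mul_pos (mul_pos (mul_pos two_pos ha2) (Real.cosh_pos m2)) (Real.sinh_pos_iff.2 hd2pos)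
  have key1 : l1 ^ 2 = (hB - hA) ^ 2 + (2 * a1 * Real.sinh d1) ^ 2 := by
    rw [hl1', hh1]
    linear_combination (2 * a1 * Real.sinh d1) ^ 2 * Real.cosh_sq_sub_sinh_sq m1
  have key2 : l2 ^ 2 = (hB - hA) ^ 2 + (2 * a2 * Real.sinh d2) ^ 2 := by
    rw [hl2', hh2]
    linear_combination (2 * a2 * Real.sinh d2) ^ 2 * Real.cosh_sq_sub_sinh_sq m2
  -- Step A : a1 ≤ a2
  have haa : a1 ≤ a2 := by
    by_contra hcon
    push_neg at hcon
    have hd12 : d1 < d2 := by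
      rw [hd1d, hd2d]
      exact div_lt_div_of_pos_left (by linarith) (by linarith) (by linarith)
    have hr : Real.sinh d1 / d1 < Real.sinh d2 / d2 := sinh_div_strict hd1pos hd12
    have had1 : a1 * d1 = (xB - xA) / 2 := by rw [hd1d]; field_simp
    have had2 : a2 * d2 = (xB - xA) / 2 := by rw [hd2d]; field_simp
    have q1 : a1 * Real.sinh d1 = ((xB - xA) / 2) * (Real.sinh d1 / d1) := by
      rw [← had1]; field_simp
    have q2 : a2 * Real.sinh d2 = ((xB - xA) / 2) * (Real.sinh d2 / d2) := by
      rw [← had2]; field_simp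
    have hP : a1 * Real.sinh d1 < a2 * Real.sinh d2 := by
      rw [q1, q2]
      exact mul_lt_mul_of_pos_left hr (by linarith)
    have hP1 : 0 < a1 * Real.sinh d1 := mul_pos ha1 (Real.sinh_pos_iff.2 hd1pos)
    have hsq : (2 * a1 * Real.sinh d1) ^ 2 < (2 * a2 * Real.sinh d2) ^ 2 :=
      pow_lt_pow_left₀ (by linarith) (by linarith) (by norm_num)
    have h12 : l1 ^ 2 < l2 ^ 2 := by rw [key1, key2]; linarith
    have h21 : l2 ^ 2 ≤ l1 ^ 2 := pow_le_pow_left₀ hl2pos.le hl 2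
    linarith
  rcases eq_or_lt_of_le haa with heq | hlt
  · -- equal parameters: the catenaries coincide
    subst heq
    have hdd : d1 = d2 := by rw [hd1d, hd2d]
    rw [hdd] at hh1
    have hE : 2 * a1 * Real.sinh m1 * Real.sinh d2 = 2 * a1 * Real.sinh m2 * Real.sinh d2 := by
      linarith [hh1, hh2]
    have hsd : Real.sinh d2 ≠ 0 := ne_of_gt (Real.sinh_pos_iff.2 hd2pos)
    have hsm : Real.sinh m1 = Real.sinh m2 := by
      have h5 := mul_right_cancel₀ hsd hE
      have h6 : (2 * a1) * Real.sinh m1 = (2 * a1) * Real.sinh m2 := by linarith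
      exact mul_left_cancel₀ (by positivity) h6
    have hmm : m1 = m2 := Real.sinh_injective hsm
    have hx0 : x01 = x02 := by
      rw [hmm, hm2] at hm1
      field_simp at hm1
      linarith
    have hy0 : y01 = y02 := by
      rw [hx0] at hA1
      linarith [hA1, hA2]
    intro x _
    rw [hx0, hy0]
  · -- a1 < a2 : maximum principle argument
    intro x hxmem
    by_contra hcon
    push_neg at hcon
    try simp only at hcon
    set f : ℝ → ℝ := fun z =>
      (a1 * Real.cosh ((z - x01) / a1) + y01) - (a2 * Real.cosh ((z - x02) / a2) + y02) with hf
    have hfc : Continuous f := by fun_prop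
    obtain ⟨c, hcmem, hcmax⟩ := (isCompact_Icc).exists_isMaxOn
      (Set.nonempty_Icc.2 hx.le) hfc.continuousOn
    have hfx : 0 < f x := by simp only [hf]; linarith
    have hfcpos : 0 < f c := lt_of_lt_of_le hfx (hcmax hxmem)
    have hfA : f xA = 0 := by simp only [hf]; linarith
    have hfB : f xB = 0 := by simp only [hf]; linarith
    have hcIoo : c ∈ Set.Ioo xA xB := by
      rcases hcmem with ⟨h1, h2⟩
      constructor
      · rcases lt_or_eq_of_le h1 with h | h
        · exact h
        · exfalso; rw [h] at hfA; linarith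
      · rcases lt_or_eq_of_le h2 with h | h
        · exact h
        · exfalso; rw [← h] at hfB; linarith
    have hloc : IsLocalMax f c := hcmax.isLocalMax (Icc_mem_nhds hcIoo.1 hcIoo.2)
    have hdf : ∀ z, HasDerivAt f
        (Real.sinh ((z - x01) / a1) - Real.sinh ((z - x02) / a2)) z := fun z =>
      (cat_hasDerivAt a1 x01 y01 ha1.ne' z).sub (cat_hasDerivAt a2 x02 y02 ha2.ne' z)
    have hzero : Real.sinh ((c - x01) / a1) - Real.sinh ((c - x02) / a2) = 0 :=
      hloc.hasDerivAt_eq_zero (hdf c)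
    have huc : (c - x01) / a1 = (c - x02) / a2 := Real.sinh_injective (by linarith)
    set g : ℝ → ℝ := fun z => Real.sinh ((z - x01) / a1) - Real.sinh ((z - x02) / a2) with hg
    have hgc : g c = 0 := hzero
    have hgd : HasDerivAt g
        (Real.cosh ((c - x01) / a1) / a1 - Real.cosh ((c - x02) / a2) / a2) c :=
      (cat_deriv_hasDerivAt a1 x01 ha1.ne' c).sub (cat_deriv_hasDerivAt a2 x02 ha2.ne' c)
    have hD : 0 < Real.cosh ((c - x01) / a1) / a1 - Real.cosh ((c - x02) / a2) / a2 := by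
      rw [← huc]
      have := div_lt_div_of_pos_left (Real.cosh_pos ((c - x01) / a1)) ha1 hlt
      linarith
    have hslope := hasDerivAt_iff_tendsto_slope.1 hgd
    have hev : ∀ᶠ z in nhdsWithin c {c}ᶜ, 0 < slope g c z :=
      hslope.eventually (eventually_gt_nhds hD)
    have hev' : ∀ᶠ z in nhdsWithin c (Set.Ioi c), 0 < slope g c z :=
      hev.filter_mono (nhdsWithin_mono c (fun z hz => Set.mem_compl_singleton_iff.2
        (ne_of_gt hz)))
    obtain ⟨u, hu, hsub⟩ := mem_nhdsGT_iff_exists_Ioc_subset.1 hev'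
    set b := min u xB with hb
    have hcb : c < b := lt_min hu hcIoo.2
    have hbB : b ≤ xB := min_le_right _ _
    have gpos : ∀ z ∈ Set.Ioo c b, 0 < g z := by
      intro z hz
      have hzu : z ∈ Set.Ioc c u := ⟨hz.1, le_trans hz.2.le (min_le_left _ _)⟩
      have hs : 0 < slope g c z := hsub hzu
      rw [slope_def_field] at hs
      have hzc : 0 < z - c := sub_pos.2 hz.1
      have := mul_pos hs hzc
      rw [div_mul_cancel₀ _ (ne_of_gt hzc)] at this
      rw [hgc] at this
      linarith
    have hmono : StrictMonoOn f (Set.Icc c b) := by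
      apply strictMonoOn_of_deriv_pos (convex_Icc c b) hfc.continuousOn
      intro z hz
      rw [interior_Icc] at hz
      rw [(hdf z).deriv]
      exact gpos z hz
    have h7 : f c < f b := hmono (Set.left_mem_Icc.2 hcb.le) (Set.right_mem_Icc.2 hcb.le) hcb
    have h8 : f b ≤ f c := hcmax ⟨le_trans hcmem.1 hcb.le, hbB⟩
    linarith
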